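/- Let S have (p,δ)-structure with characteristics (κ₀, κ₁, p) for some p ∈ (1,∞) and δ ≥ 0, and let F be the associated tensor field. For symmetric A, B ∈ ℝ^{3×3}_sym with A ≠ 0 (or δ > 0) define 𝒫(A, B) := Σ_{k,l,m,n=1}^{3} ∂_{kl}S_{mn}(A) B_{kl} B_{mn}. Then there exist constants c, C > 0 depending only on the characteristics (κ₀, κ₁, p) of S such that c·φ''(|A|)·|B|² ≤ 𝒫(A, B) ≤ C·φ''(|A|)·|B|² and c·|DF(A)[B]|² ≤ 𝒫(A, B) ≤ C·|DF(A)[B]|², where φ = φ_{p,δ} and DF(A)[B] is the directional derivative of F at A in direction B. In particular, for a smooth symmetric tensor field Q this yields 𝒫_i(Q) := ∂_i S(Q)·∂_i Q ~ φ''(|Q|)|∂_i Q|² ~ |∂_i F(Q)|² for i = 1,2,3. -/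

import Mathlib

noncomputable section

open Matrix

attribute [local instance] Matrix.normedAddCommGroup Matrix.normedSpace

/-- 3×3 real matrices. -/
abbrev Mat3 := Matrix (Fin 3) (Fin 3) ℝ

/-- The symmetric part `P^sym = (P + Pᵀ)/2` of a matrix. -/
def msym (P : Mat3) : Mat3 := (1 / 2 : ℝ) • (P + Pᵀ)

/-- The scalar product of tensors `A·B = Σ_{i,j} A_{ij} B_{ij}`. -/
def mdot (A B : Mat3) : ℝ := ∑ i, ∑ j, A i j * B i j

/-- The Euclidean (Frobenius) norm `|A| = √(A·A)`. -/
def mnorm (A : Mat3) : ℝ := Real.sqrt (mdot A A)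

/-- The N-function `φ_{p,δ}(t) = ∫₀ᵗ (δ+s)^{p-2} s ds`. -/
def phi (p δ t : ℝ) : ℝ := ∫ s in (0:ℝ)..t, (δ + s) ^ (p - 2) * s

/-- Its first derivative `φ'(t) = (δ+t)^{p-2} t`. -/
def phi' (p δ t : ℝ) : ℝ := (δ + t) ^ (p - 2) * t

/-- Its second derivative `φ''(t) = (p-2)(δ+t)^{p-3} t + (δ+t)^{p-2}` (for `t > 0`). -/
def phi'' (p δ t : ℝ) : ℝ := (p - 2) * (δ + t) ^ (p - 3) * t + (δ + t) ^ (p - 2)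

/-- The partial derivative `∂_{kl} S_{ij}(P)` of the `(i,j)` component of `S`
with respect to the `(k,l)` matrix entry. -/
def DS (S : Mat3 → Mat3) (P : Mat3) (k l i j : Fin 3) : ℝ :=
  fderiv ℝ S P (single k l 1) i j

/-- A tensor field `S` has `(p,δ)`-structure with characteristics `(κ₀, κ₁, p)`. -/
structure PDelta (p δ κ₀ κ₁ : ℝ) (S : Mat3 → Mat3) : Prop where
  cont : Continuous S
  smooth : ContDiffOn ℝ 1 S {(0 : Mat3)}ᶜ
  symval : ∀ P, (S P)ᵀ = S P
  symdep : ∀ P, S P = S (msym P)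
  zero : S 0 = 0
  lower : ∀ P Q : Mat3, msym P ≠ 0 →
    κ₀ * phi'' p δ (mnorm (msym P)) * (mnorm (msym Q)) ^ 2 ≤
      ∑ i, ∑ j, ∑ k, ∑ l, DS S P k l i j * Q i j * Q k l
  upper : ∀ P : Mat3, msym P ≠ 0 → ∀ i j k l : Fin 3,
    |DS S P k l i j| ≤ κ₁ * phi'' p δ (mnorm (msym P))

/-- The tensor field `F(P) = (δ + |P^sym|)^{(p-2)/2} P^sym` associated to `S`. -/
def Fassoc (p δ : ℝ) (P : Mat3) : Mat3 :=
  (δ + mnorm (msym P)) ^ ((p - 2) / 2) • msym P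

/-- `𝒫(A,B) = Σ_{k,l,m,n} ∂_{kl}S_{mn}(A) B_{kl} B_{mn}`. -/
def Pquad (S : Mat3 → Mat3) (A B : Mat3) : ℝ :=
  ∑ k, ∑ l, ∑ m, ∑ n, DS S A k l m n * B k l * B m n

section AuxiliaryLemmas
lemma msym_apply (P : Mat3) (i j : Fin 3) : msym P i j = (1/2) * (P i j + P j i) := by
  simp [msym, Matrix.add_apply, Matrix.smul_apply, Matrix.transpose_apply, smul_eq_mul]

lemma msym_of_symm {A : Mat3} (h : Aᵀ = A) : msym A = A := by
  ext i j
  have h2 : A j i = A i j := by have := congrFun (congrFun h i) j; simpa using this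
  rw [msym_apply, h2]; ring

lemma msym_add (P Q : Mat3) : msym (P + Q) = msym P + msym Q := by
  ext i j; simp [msym_apply, Matrix.add_apply]; ring

lemma msym_smul (c : ℝ) (P : Mat3) : msym (c • P) = c • msym P := by
  ext i j; simp [msym_apply, Matrix.smul_apply, smul_eq_mul]; ring

lemma msym_zero : msym (0 : Mat3) = 0 := by ext i j; simp [msym_apply]

lemma mdot_self_nonneg (A : Mat3) : 0 ≤ mdot A A :=
  Finset.sum_nonneg fun i _ => Finset.sum_nonneg fun j _ => mul_self_nonneg _

lemma mnorm_nonneg (A : Mat3) : 0 ≤ mnorm A := Real.sqrt_nonneg _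

lemma mnorm_sq (A : Mat3) : mnorm A ^ 2 = mdot A A := Real.sq_sqrt (mdot_self_nonneg A)

lemma mdot_prod (A B : Mat3) : mdot A B = ∑ a : Fin 3 × Fin 3, A a.1 a.2 * B a.1 a.2 := by
  simp [mdot, Fintype.sum_prod_type]

lemma mdot_self_eq_zero {A : Mat3} (h : mdot A A = 0) : A = 0 := by
  rw [mdot_prod] at h
  have := (Finset.sum_eq_zero_iff_of_nonneg (fun a _ => mul_self_nonneg (A a.1 a.2))).mp h
  ext i j
  have h2 := this (i, j) (Finset.mem_univ _)
  simpa using mul_self_eq_zero.mp h2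

lemma mnorm_pos {A : Mat3} (h : A ≠ 0) : 0 < mnorm A := by
  apply Real.sqrt_pos.2
  rcases lt_or_eq_of_le (mdot_self_nonneg A) with h' | h'
  · exact h'
  · exact absurd (mdot_self_eq_zero h'.symm) h

lemma mnorm_zero : mnorm (0 : Mat3) = 0 := by simp [mnorm, mdot]

lemma mdot_sq_le (A B : Mat3) : mdot A B ^ 2 ≤ mdot A A * mdot B B := by
  rw [mdot_prod, mdot_prod, mdot_prod]
  have := Finset.sum_mul_sq_le_sq_mul_sq Finset.univ (fun a : Fin 3 × Fin 3 => A a.1 a.2)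
    (fun a : Fin 3 × Fin 3 => B a.1 a.2)
  calc (∑ a : Fin 3 × Fin 3, A a.1 a.2 * B a.1 a.2) ^ 2
      ≤ (∑ a : Fin 3 × Fin 3, A a.1 a.2 ^ 2) * ∑ a : Fin 3 × Fin 3, B a.1 a.2 ^ 2 := this
    _ = _ := by simp [sq]

lemma sum_reorder (D : Fin 3 → Fin 3 → Fin 3 → Fin 3 → ℝ) (B : Mat3) :
    (∑ i, ∑ j, ∑ k, ∑ l, D k l i j * B i j * B k l) =
      ∑ k, ∑ l, ∑ m, ∑ n, D k l m n * B k l * B m n := by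
  simp only [Fin.sum_univ_three]
  ring

lemma quad_upper (D : Fin 3 → Fin 3 → Fin 3 → Fin 3 → ℝ) (B : Mat3) (κφ : ℝ)
    (hD : ∀ k l m n, |D k l m n| ≤ κφ) :
    (∑ k, ∑ l, ∑ m, ∑ n, D k l m n * B k l * B m n) ≤ 9 * κφ * mdot B B := by
  have hκφ : 0 ≤ κφ := le_trans (abs_nonneg _) (hD 0 0 0 0)
  have key : (∑ k, ∑ l, ∑ m, ∑ n, D k l m n * B k l * B m n)
      = ∑ a : Fin 3 × Fin 3, ∑ b : Fin 3 × Fin 3, D a.1 a.2 b.1 b.2 * B a.1 a.2 * B b.1 b.2 := by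
    simp [Fintype.sum_prod_type]
  rw [key]
  have step1 : (∑ a : Fin 3 × Fin 3, ∑ b : Fin 3 × Fin 3,
      D a.1 a.2 b.1 b.2 * B a.1 a.2 * B b.1 b.2)
      ≤ ∑ a : Fin 3 × Fin 3, ∑ b : Fin 3 × Fin 3, κφ * (|B a.1 a.2| * |B b.1 b.2|) := by
    apply Finset.sum_le_sum; intro a _
    apply Finset.sum_le_sum; intro b _
    calc D a.1 a.2 b.1 b.2 * B a.1 a.2 * B b.1 b.2
        ≤ |D a.1 a.2 b.1 b.2 * B a.1 a.2 * B b.1 b.2| := le_abs_self _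
      _ = |D a.1 a.2 b.1 b.2| * (|B a.1 a.2| * |B b.1 b.2|) := by
          rw [abs_mul, abs_mul]; ring
      _ ≤ κφ * (|B a.1 a.2| * |B b.1 b.2|) := by
          apply mul_le_mul_of_nonneg_right (hD _ _ _ _)
          positivity
  have step2 : (∑ a : Fin 3 × Fin 3, ∑ b : Fin 3 × Fin 3, κφ * (|B a.1 a.2| * |B b.1 b.2|))
      = κφ * (∑ a : Fin 3 × Fin 3, |B a.1 a.2|) ^ 2 := by
    rw [sq, Finset.sum_mul_sum, Finset.mul_sum]
    exact Finset.sum_congr rfl fun a _ => by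
      rw [Finset.mul_sum]
  have step3 : (∑ a : Fin 3 × Fin 3, |B a.1 a.2|) ^ 2 ≤ 9 * mdot B B := by
    have := sq_sum_le_card_mul_sum_sq (s := (Finset.univ : Finset (Fin 3 × Fin 3)))
      (f := fun a => |B a.1 a.2|)
    simp only [Finset.card_univ, Fintype.card_prod, Fintype.card_fin, sq_abs] at this
    calc (∑ a : Fin 3 × Fin 3, |B a.1 a.2|) ^ 2 ≤ (9:ℕ) * ∑ a : Fin 3 × Fin 3, B a.1 a.2 ^ 2 := by
          exact_mod_cast this
      _ = 9 * mdot B B := by rw [mdot_prod]; push_cast; ring_nf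
  calc _ ≤ κφ * (∑ a : Fin 3 × Fin 3, |B a.1 a.2|) ^ 2 := step1.trans (le_of_eq step2)
    _ ≤ κφ * (9 * mdot B B) := mul_le_mul_of_nonneg_left step3 hκφ
    _ = 9 * κφ * mdot B B := by ring

lemma phi''_key {p δ t : ℝ} (hγ : 0 < δ + t) :
    phi'' p δ t = (δ + t) ^ (p - 2) * ((δ + (p-1)*t) / (δ + t)) := by
  have h3 : (δ + t) ^ (p - 3) = (δ + t) ^ (p - 2) / (δ + t) := by
    rw [show p - 3 = (p - 2) - 1 by ring, Real.rpow_sub hγ, Real.rpow_one]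
  rw [phi'', h3]
  field_simp
  ring

lemma phi''_bounds {p δ t : ℝ} (hp : 1 < p) (hδ : 0 ≤ δ) (ht : 0 ≤ t) (hγ : 0 < δ + t) :
    min 1 (p-1) * (δ+t) ^ (p-2) ≤ phi'' p δ t ∧
      phi'' p δ t ≤ (|p-2|/2+1)^2 * (δ+t) ^ (p-2) := by
  set m := min 1 (p-1) with hm
  set M := (|p-2|/2+1)^2 with hM
  have hg : (0:ℝ) < (δ+t) ^ (p-2) := Real.rpow_pos_of_pos hγ _
  have hm1 : m ≤ 1 := min_le_left _ _
  have hmp : m ≤ p - 1 := min_le_right _ _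
  have hM1 : (1:ℝ) ≤ M := by nlinarith [abs_nonneg (p-2)]
  have hMp : p - 1 ≤ M := by
    rcases le_or_gt p 2 with h | h
    · linarith
    · have : |p-2| = p-2 := abs_of_pos (by linarith)
      rw [hM, this]; nlinarith
  rw [phi''_key hγ]
  constructor
  · have h1 : m ≤ (δ + (p-1)*t) / (δ + t) := by
      rw [le_div_iff₀ hγ]; nlinarith
    calc m * (δ+t)^(p-2) = (δ+t)^(p-2) * m := by ring
      _ ≤ (δ+t)^(p-2) * ((δ + (p-1)*t)/(δ+t)) := mul_le_mul_of_nonneg_left h1 hg.le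
  · have h1 : (δ + (p-1)*t) / (δ + t) ≤ M := by
      rw [div_le_iff₀ hγ]; nlinarith
    calc (δ+t)^(p-2) * ((δ + (p-1)*t)/(δ+t)) ≤ (δ+t)^(p-2) * M :=
        mul_le_mul_of_nonneg_left h1 hg.le
      _ = M * (δ+t)^(p-2) := by ring

def msymLin : Mat3 →ₗ[ℝ] Mat3 where
  toFun := msym
  map_add' := msym_add
  map_smul' := fun c P => by simp [msym_smul]

def msymL : Mat3 →L[ℝ] Mat3 := LinearMap.toContinuousLinearMap msymLin

lemma msymL_apply (P : Mat3) : msymL P = msym P := rfl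

def entryL (i j : Fin 3) : Mat3 →L[ℝ] ℝ :=
  LinearMap.toContinuousLinearMap
    { toFun := fun P : Mat3 => P i j
      map_add' := fun _ _ => rfl
      map_smul' := fun _ _ => rfl }

def cL (a : Fin 3 × Fin 3) : Mat3 →L[ℝ] ℝ := (entryL a.1 a.2).comp msymL

lemma cL_apply (a : Fin 3 × Fin 3) (P : Mat3) : cL a P = msym P a.1 a.2 := rfl

lemma hasFDerivAt_q (A : Mat3) :
    HasFDerivAt (fun P => mdot (msym P) (msym P))
      (∑ a : Fin 3 × Fin 3, (cL a A • cL a + cL a A • cL a)) A := by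
  have h1 : ∀ a : Fin 3 × Fin 3,
      HasFDerivAt (fun P => cL a P * cL a P) (cL a A • cL a + cL a A • cL a) A :=
    fun a => ((cL a).hasFDerivAt).mul ((cL a).hasFDerivAt)
  have h2 := HasFDerivAt.sum (fun a (_ : a ∈ (Finset.univ : Finset (Fin 3 × Fin 3))) => h1 a)
  have hfun : (fun P => mdot (msym P) (msym P))
      = fun P => ∑ a : Fin 3 × Fin 3, cL a P * cL a P := by
    funext P; rw [mdot_prod]; rfl
  rw [hfun]
  exact h2

lemma fassoc_fderiv_apply {p δ : ℝ} {A : Mat3} (hγ : 0 < δ + mnorm A)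
    (hAs : Aᵀ = A) (hA : A ≠ 0) (B : Mat3) :
    fderiv ℝ (Fassoc p δ) A B =
      ((p-2)/2 * (δ + mnorm A) ^ ((p-2)/2 - 1) * (mdot A (msym B) / mnorm A)) • A
        + ((δ + mnorm A) ^ ((p-2)/2)) • msym B := by
  have hmA : msym A = A := msym_of_symm hAs
  have htA : 0 < mnorm A := mnorm_pos hA
  have hqA : mdot (msym A) (msym A) ≠ 0 := by
    rw [hmA]
    intro h; exact hA (mdot_self_eq_zero h)
  set Dq := (∑ a : Fin 3 × Fin 3, (cL a A • cL a + cL a A • cL a)) with hDq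
  have hq := hasFDerivAt_q A
  -- derivative of P ↦ mnorm (msym P)
  have hn : HasFDerivAt (fun P => mnorm (msym P))
      ((1 / (2 * Real.sqrt (mdot (msym A) (msym A)))) • Dq) A := by
    have hs := Real.hasDerivAt_sqrt hqA
    exact hs.comp_hasFDerivAt A hq
  -- derivative of the scalar factor
  have hγ' : δ + mnorm (msym A) ≠ 0 := by rw [hmA]; exact ne_of_gt hγ
  have hrpow : HasDerivAt (fun y : ℝ => (δ + y) ^ ((p-2)/2))
      ((p-2)/2 * (δ + mnorm (msym A)) ^ ((p-2)/2 - 1)) (mnorm (msym A)) := by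
    have h1 : HasDerivAt (fun y : ℝ => δ + y) 1 (mnorm (msym A)) :=
      (hasDerivAt_id _).const_add δ
    have h2 : HasDerivAt (fun x : ℝ => x ^ ((p-2)/2))
        ((p-2)/2 * (δ + mnorm (msym A)) ^ ((p-2)/2 - 1)) (δ + mnorm (msym A)) :=
      Real.hasDerivAt_rpow_const (Or.inl hγ')
    have := h2.comp (mnorm (msym A)) h1
    rw [mul_one] at this
    exact this
  have hr : HasFDerivAt (fun P => (δ + mnorm (msym P)) ^ ((p-2)/2))
      (((p-2)/2 * (δ + mnorm (msym A)) ^ ((p-2)/2 - 1)) •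
        ((1 / (2 * Real.sqrt (mdot (msym A) (msym A)))) • Dq)) A := by
    have h1 : HasFDerivAt (fun P => δ + mnorm (msym P))
        ((1 / (2 * Real.sqrt (mdot (msym A) (msym A)))) • Dq) A := hn.const_add δ
    have h2 := (Real.hasDerivAt_rpow_const (x := δ + mnorm (msym A)) (p := (p-2)/2)
      (Or.inl hγ')).comp_hasFDerivAt A h1
    exact h2
  have hmsym : HasFDerivAt msym msymL A := msymL.hasFDerivAt
  have hF : HasFDerivAt (Fassoc p δ)
      (((δ + mnorm (msym A)) ^ ((p-2)/2)) • msymL +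
        ((((p-2)/2 * (δ + mnorm (msym A)) ^ ((p-2)/2 - 1)) •
          ((1 / (2 * Real.sqrt (mdot (msym A) (msym A)))) • Dq))).smulRight (msym A)) A :=
    hr.smul hmsym
  rw [hF.fderiv]
  -- evaluate
  have hDqB : Dq B = 2 * mdot A (msym B) := by
    rw [hDq]
    simp only [ContinuousLinearMap.coe_sum', Finset.sum_apply, ContinuousLinearMap.add_apply,
      ContinuousLinearMap.smul_apply, smul_eq_mul, cL_apply, hmA]
    rw [mdot_prod, Finset.sum_add_distrib]
    ring
  simp only [ContinuousLinearMap.add_apply, ContinuousLinearMap.smul_apply,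
    ContinuousLinearMap.smulRight_apply, msymL_apply, hmA, smul_eq_mul, hDqB]
  have hsqrt : Real.sqrt (mdot A A) = mnorm A := rfl
  rw [hsqrt]
  rw [add_comm]
  congr 2
  field_simp

lemma continuous_mnorm_msym : Continuous (fun P : Mat3 => mnorm (msym P)) := by
  have h1 : Continuous (fun P : Mat3 => mdot (msym P) (msym P)) := by
    have : (fun P : Mat3 => mdot (msym P) (msym P))
        = fun P => ∑ a : Fin 3 × Fin 3, cL a P * cL a P := by
      funext P; rw [mdot_prod]; rfl
    rw [this]
    exact continuous_finset_sum _ fun a _ => ((cL a).continuous.mul (cL a).continuous)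
  exact Real.continuous_sqrt.comp h1

lemma norm_msym_le (h : Mat3) : ‖msym h‖ ≤ ‖h‖ := by
  have h1 : ‖msym h‖ ≤ ‖(1/2:ℝ)‖ * ‖h + hᵀ‖ := norm_smul_le _ _
  have h2 : ‖h + hᵀ‖ ≤ ‖h‖ + ‖hᵀ‖ := norm_add_le _ _
  rw [Matrix.norm_transpose] at h2
  have h3 : ‖(1/2:ℝ)‖ = 1/2 := by norm_num [Real.norm_eq_abs]
  rw [h3] at h1
  nlinarith

lemma fassoc_hasFDerivAt_zero {p δ : ℝ} (hδ : 0 < δ) :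
    HasFDerivAt (Fassoc p δ) ((δ ^ ((p-2)/2)) • msymL) 0 := by
  refine hasFDerivAt_iff_isLittleO_nhds_zero.mpr ?_
  have hF0 : Fassoc p δ 0 = 0 := by simp [Fassoc, msym_zero]
  have heq : ∀ h : Mat3, Fassoc p δ (0 + h) - Fassoc p δ 0 - ((δ ^ ((p-2)/2)) • msymL) h
      = ((δ + mnorm (msym h)) ^ ((p-2)/2) - δ ^ ((p-2)/2)) • msym h := by
    intro h
    rw [zero_add, hF0, sub_zero, sub_smul]
    simp [Fassoc, msymL_apply]
  have htend : Filter.Tendsto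
      (fun h : Mat3 => (δ + mnorm (msym h)) ^ ((p-2)/2) - δ ^ ((p-2)/2)) (nhds 0) (nhds 0) := by
    have h1 : ContinuousAt (fun y : ℝ => δ + y) 0 :=
      (continuous_const.add continuous_id).continuousAt
    have h2 : ContinuousAt (fun x : ℝ => x ^ ((p-2)/2)) ((fun y : ℝ => δ + y) 0) :=
      Real.continuousAt_rpow_const _ _ (Or.inl (by simp; linarith))
    have hc : ContinuousAt (fun y : ℝ => (δ + y) ^ ((p-2)/2)) 0 := h2.comp h1
    have hn0 : Filter.Tendsto (fun h : Mat3 => mnorm (msym h)) (nhds 0) (nhds 0) := by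
      have := continuous_mnorm_msym.tendsto 0
      simpa [msym_zero, mnorm_zero] using this
    have := (hc.tendsto.comp hn0).sub (tendsto_const_nhds (x := δ ^ ((p-2)/2)))
    simpa [Function.comp_def] using this
  rw [Asymptotics.isLittleO_iff]
  intro c hc
  have hev : ∀ᶠ h : Mat3 in nhds 0,
      |(δ + mnorm (msym h)) ^ ((p-2)/2) - δ ^ ((p-2)/2)| < c := by
    have := Metric.tendsto_nhds.mp htend c hc
    simpa [Real.dist_eq] using this
  filter_upwards [hev] with h hh
  refine (congrArg (fun x : Mat3 => ‖x‖) (heq h)).trans_le ?_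
  rw [norm_smul]
  calc ‖(δ + mnorm (msym h)) ^ ((p-2)/2) - δ ^ ((p-2)/2)‖ * ‖msym h‖
      ≤ c * ‖msym h‖ := by
        apply mul_le_mul_of_nonneg_right _ (norm_nonneg _)
        rw [Real.norm_eq_abs]; exact hh.le
    _ ≤ c * ‖h‖ := mul_le_mul_of_nonneg_left (norm_msym_le h) hc.le

lemma rpow_sq' {x : ℝ} (hx : 0 ≤ x) (e : ℝ) : (x ^ e)^(2:ℕ) = x ^ (2*e) := by
  rw [← Real.rpow_natCast (x ^ e) 2, ← Real.rpow_mul hx]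
  ring_nf

lemma core_ineq (e2 t b u g2 g3 g4 γ : ℝ) (hγ : 0 < γ) (ht : 0 < t) (htγ : t ≤ γ)
    (hb : 0 ≤ b) (hu0 : 0 ≤ u) (hutb : u ≤ t * b)
    (hg4p : 0 < g4) (hg3p : 0 < g3) (hg2p : 0 < g2)
    (hg43 : g4 * γ = g3) (hg32 : g3 * γ = g2) :
    min 1 (1+2*e2) * g2 * b ≤ e2^2*g4*(u*t) + 2*e2*g3*u + g2*b ∧
      e2^2*g4*(u*t) + 2*e2*g3*u + g2*b ≤ (|e2|+1)^2*g2*b := by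
  have hg2b : 0 ≤ g2 * b := mul_nonneg hg2p.le hb
  have hg3t : g3 * t ≤ g2 := by nlinarith
  have hg4t : g4 * t ≤ g3 := by nlinarith
  constructor
  · rcases le_or_gt 0 e2 with he | he
    · have t1 : 0 ≤ e2^2 * g4 * (u*t) := by positivity
      have t2 : 0 ≤ 2 * e2 * g3 * u := by positivity
      have hm1 : min 1 (1+2*e2) ≤ 1 := min_le_left _ _
      nlinarith [mul_le_mul_of_nonneg_right hm1 hg2b]
    · have t1 : 0 ≤ e2^2 * g4 * (u*t) := by positivity
      have hm2 : min 1 (1+2*e2) ≤ 1+2*e2 := min_le_right _ _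
      have hc : (2*e2) ≤ 0 := by linarith
      have h' : g3*u ≤ g3*(t*b) := mul_le_mul_of_nonneg_left hutb hg3p.le
      have step1 := mul_le_mul_of_nonpos_left h' hc
      have h'' : g3*(t*b) ≤ g2*b := by nlinarith
      have step2 := mul_le_mul_of_nonpos_left h'' hc
      nlinarith [mul_le_mul_of_nonneg_right hm2 hg2b]
  · have k1 : e2^2 * g4 * (u*t) ≤ e2^2 * (g2 * b) := by
      have h1 : g4*(u*t) ≤ g4*(t*b*t) :=
        mul_le_mul_of_nonneg_left (by nlinarith) hg4p.le
      have h4 : g4*(t*b*t) ≤ g2*b := by nlinarith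
      nlinarith [sq_nonneg e2]
    have k2 : 2 * e2 * g3 * u ≤ 2 * |e2| * (g2 * b) := by
      have h1 : e2 * (g3 * u) ≤ |e2| * (g3*u) :=
        mul_le_mul_of_nonneg_right (le_abs_self _) (by positivity)
      have h2 : g3 * u ≤ g3 * (t*b) := mul_le_mul_of_nonneg_left hutb hg3p.le
      have h4 : g3*(t*b) ≤ g2*b := by nlinarith
      have h5 : |e2| * (g3*u) ≤ |e2| * (g2*b) :=
        mul_le_mul_of_nonneg_left (by linarith) (abs_nonneg _)
      nlinarith
    have he2sq : |e2|^2 = e2^2 := sq_abs e2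
    nlinarith [k1, k2]

lemma scalar_bounds {p δ t b s : ℝ} (hp : 1 < p) (hδ : 0 ≤ δ) (ht : 0 < t)
    (hb : 0 ≤ b) (hs : s^2 ≤ t^2 * b) :
    min 1 (p-1) * (δ+t)^(p-2) * b ≤
      ((p-2)/2 * (δ+t)^((p-2)/2-1) * (s/t))^2 * t^2
        + 2 * ((p-2)/2 * (δ+t)^((p-2)/2-1) * (s/t)) * ((δ+t)^((p-2)/2)) * s
        + ((δ+t)^((p-2)/2))^2 * b ∧
      ((p-2)/2 * (δ+t)^((p-2)/2-1) * (s/t))^2 * t^2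
        + 2 * ((p-2)/2 * (δ+t)^((p-2)/2-1) * (s/t)) * ((δ+t)^((p-2)/2)) * s
        + ((δ+t)^((p-2)/2))^2 * b ≤ (|p-2|/2+1)^2 * (δ+t)^(p-2) * b := by
  have hγ : 0 < δ + t := by positivity
  have hx2 : ((δ+t)^((p-2)/2))^(2:ℕ) = (δ+t) ^ (p-2) := by
    rw [rpow_sq' hγ.le]; congr 1; ring
  have hy2 : ((δ+t)^((p-2)/2-1))^(2:ℕ) = (δ+t) ^ (p-4) := by
    rw [rpow_sq' hγ.le]; congr 1; ring
  have hxy : (δ+t)^((p-2)/2-1) * (δ+t)^((p-2)/2) = (δ+t) ^ (p-3) := by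
    rw [← Real.rpow_add hγ]; congr 1; ring
  have hE : ((p-2)/2 * (δ+t)^((p-2)/2-1) * (s/t))^2 * t^2
        + 2 * ((p-2)/2 * (δ+t)^((p-2)/2-1) * (s/t)) * ((δ+t)^((p-2)/2)) * s
        + ((δ+t)^((p-2)/2))^2 * b
      = ((p-2)/2)^2 * ((δ+t)^(p-4)) * ((s^2/t)*t) + 2*((p-2)/2) * ((δ+t)^(p-3)) * (s^2/t)
          + ((δ+t)^(p-2)) * b := by
    rw [← hx2, ← hy2, ← hxy]
    push_cast
    field_simp
  rw [hE]
  have hg43 : (δ+t)^(p-4) * (δ+t) = (δ+t)^(p-3) := by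
    rw [← Real.rpow_add_one hγ.ne']; congr 1; ring
  have hg32 : (δ+t)^(p-3) * (δ+t) = (δ+t)^(p-2) := by
    rw [← Real.rpow_add_one hγ.ne']; congr 1; ring
  have hcore := core_ineq ((p-2)/2) t b (s^2/t) ((δ+t)^(p-2)) ((δ+t)^(p-3)) ((δ+t)^(p-4))
    (δ+t) hγ ht (by linarith) hb (by positivity)
    (by rw [div_le_iff₀ ht]; nlinarith)
    (Real.rpow_pos_of_pos hγ (p-4)) (Real.rpow_pos_of_pos hγ (p-3))
    (Real.rpow_pos_of_pos hγ (p-2)) hg43 hg32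
  have e1 : 1+2*((p-2)/2) = p-1 := by ring
  have e2 : |(p-2)/2| = |p-2|/2 := by rw [abs_div]; norm_num
  rw [e1, e2] at hcore
  exact hcore

lemma mdot_expand (x y : ℝ) (X Y : Mat3) :
    mdot (x•X + y•Y) (x•X + y•Y)
      = x^2 * mdot X X + 2*x*y * mdot X Y + y^2 * mdot Y Y := by
  simp only [mdot, Fin.sum_univ_three, Matrix.add_apply, Matrix.smul_apply, smul_eq_mul]
  ring

lemma mdot_smul_self (c : ℝ) (X : Mat3) : mdot (c•X) (c•X) = c^2 * mdot X X := by
  simp only [mdot, Fin.sum_univ_three, Matrix.smul_apply, smul_eq_mul]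
  ring

lemma M0_ge_one {p : ℝ} : (1:ℝ) ≤ (|p-2|/2+1)^2 := by nlinarith [abs_nonneg (p-2)]

lemma min_pos {p : ℝ} (hp : 1 < p) : 0 < min 1 (p-1) := lt_min one_pos (by linarith)

lemma fassoc_L3 {p δ : ℝ} (hp : 1 < p) (hδ : 0 ≤ δ) {A B : Mat3}
    (hAs : Aᵀ = A) (hBs : Bᵀ = B) (hc : 0 < δ ∨ A ≠ 0) :
    min 1 (p-1) * ((δ + mnorm A)^(p-2) * mnorm B ^ 2)
        ≤ mnorm (fderiv ℝ (Fassoc p δ) A B) ^ 2 ∧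
      mnorm (fderiv ℝ (Fassoc p δ) A B) ^ 2
        ≤ (|p-2|/2+1)^2 * ((δ + mnorm A)^(p-2) * mnorm B ^ 2) := by
  have hmB : msym B = B := msym_of_symm hBs
  by_cases hA : A = 0
  · subst hA
    have hδ0 : 0 < δ := by rcases hc with h | h; exact h; exact absurd rfl h
    rw [(fassoc_hasFDerivAt_zero hδ0).fderiv]
    have happ : ((δ ^ ((p-2)/2)) • msymL) B = (δ ^ ((p-2)/2)) • B := by
      simp [ContinuousLinearMap.smul_apply, msymL_apply, hmB]
    rw [happ]
    have hsq : mnorm ((δ ^ ((p-2)/2)) • B) ^ 2 = δ^(p-2) * mnorm B ^ 2 := by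
      rw [mnorm_sq, mdot_smul_self, ← mnorm_sq]
      congr 1
      have := rpow_sq' hδ ((p-2)/2)
      rw [show ((δ ^ ((p-2)/2))^2 : ℝ) = (δ ^ ((p-2)/2))^(2:ℕ) by norm_num, this]
      congr 1; ring
    rw [hsq, mnorm_zero, add_zero]
    have hg : 0 < δ^(p-2) := Real.rpow_pos_of_pos hδ0 _
    have hb : 0 ≤ mnorm B ^ 2 := sq_nonneg _
    constructor
    · nlinarith [min_pos hp, min_le_left 1 (p-1), mul_nonneg hg.le hb]
    · nlinarith [M0_ge_one (p := p), mul_nonneg hg.le hb]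
  · have htA : 0 < mnorm A := mnorm_pos hA
    have hγ : 0 < δ + mnorm A := by positivity
    rw [fassoc_fderiv_apply hγ hAs hA B]
    rw [hmB]
    have hCS : (mdot A B)^2 ≤ (mnorm A)^2 * (mnorm B)^2 := by
      rw [mnorm_sq, mnorm_sq]; exact mdot_sq_le A B
    have hsb := scalar_bounds (t := mnorm A) (b := mnorm B ^ 2) (s := mdot A B)
      hp hδ htA (sq_nonneg _) hCS
    have key : mnorm (((p-2)/2 * (δ + mnorm A) ^ ((p-2)/2 - 1) * (mdot A B / mnorm A)) • A
          + ((δ + mnorm A) ^ ((p-2)/2)) • B) ^ 2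
        = ((p-2)/2 * (δ+mnorm A)^((p-2)/2-1) * (mdot A B/mnorm A))^2 * (mnorm A)^2
          + 2 * ((p-2)/2 * (δ+mnorm A)^((p-2)/2-1) * (mdot A B/mnorm A))
              * ((δ+mnorm A)^((p-2)/2)) * (mdot A B)
          + ((δ+mnorm A)^((p-2)/2))^2 * (mnorm B)^2 := by
      rw [mnorm_sq, mdot_expand, ← mnorm_sq A, ← mnorm_sq B]
    rw [key]
    constructor
    · linarith [hsb.1]
    · linarith [hsb.2]

lemma fderiv_shift (f : Mat3 → Mat3) (c x : Mat3) :
    fderiv ℝ (fun y => f (y + c)) x = fderiv ℝ f (x + c) := by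
  by_cases h : DifferentiableAt ℝ f (x + c)
  · have h1 : HasFDerivAt (fun y => f (y + c)) (fderiv ℝ f (x + c)) x := by
      have := h.hasFDerivAt.comp x ((hasFDerivAt_id x).add_const c)
      exact this
    exact h1.fderiv
  · rw [fderiv_zero_of_not_differentiableAt h, fderiv_zero_of_not_differentiableAt]
    intro hd
    apply h
    have hsub : DifferentiableAt ℝ (fun z : Mat3 => z - c) (x + c) :=
      (differentiable_id.sub_const c).differentiableAt
    have hx : x + c - c = x := add_sub_cancel_right x c
    have hd' : DifferentiableAt ℝ (fun y => f (y + c)) (x + c - c) := by rwa [hx]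
    have hd2 := hd'.comp (x + c) hsub
    have : (fun z : Mat3 => f (z - c + c)) = f := by funext z; simp
    rwa [Function.comp_def, this] at hd2

lemma Pquad_eq (S : Mat3 → Mat3) (A B : Mat3) :
    Pquad S A B = ∑ i, ∑ j, ∑ k, ∑ l, DS S A k l i j * B i j * B k l :=
  (sum_reorder (DS S A) B).symm

lemma Pquad_L2 {p δ κ₀ κ₁ : ℝ} {S : Mat3 → Mat3} (hp : 1 < p) (hδ : 0 ≤ δ)
    (pd : PDelta p δ κ₀ κ₁ S) {A B : Mat3} (hAs : Aᵀ = A) (hBs : Bᵀ = B)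
    (hc : 0 < δ ∨ A ≠ 0) :
    κ₀ * phi'' p δ (mnorm A) * mnorm B ^ 2 ≤ Pquad S A B ∧
      Pquad S A B ≤ 9 * (κ₁ * phi'' p δ (mnorm A)) * mnorm B ^ 2 := by
  have hmB : msym B = B := msym_of_symm hBs
  by_cases hA : A = 0
  case neg =>
    have hmA : msym A = A := msym_of_symm hAs
    have hne : msym A ≠ 0 := by rw [hmA]; exact hA
    constructor
    · have := pd.lower A B hne
      rw [hmA, hmB, ← Pquad_eq] at this
      exact this
    · have hup : ∀ k l m n : Fin 3, |DS S A k l m n| ≤ κ₁ * phi'' p δ (mnorm A) := by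
        intro k l m n
        have := pd.upper A hne m n k l
        rwa [hmA] at this
      have := quad_upper (DS S A) B (κ₁ * phi'' p δ (mnorm A)) hup
      rw [mnorm_sq]
      unfold Pquad
      exact this
  case pos =>
    subst hA
    have hδ0 : 0 < δ := by
      rcases hc with h | h
      · exact h
      · exact absurd rfl h
    -- the antisymmetric translation matrix and symmetric direction
    set P₀ : Mat3 := single 0 1 (1:ℝ) - single 1 0 (1:ℝ) with hP₀def
    set U : Mat3 := single 0 0 (1:ℝ) with hUdef
    have hmsymP₀ : msym P₀ = 0 := by
      ext i j
      fin_cases i <;> fin_cases j <;>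
        simp [hP₀def, msym_apply, Matrix.sub_apply, single, Matrix.of_apply] <;> norm_num
    have hP₀ne : P₀ ≠ 0 := by
      intro h
      have := congrFun (congrFun h 0) 1
      simp [hP₀def, Matrix.sub_apply, single, Matrix.of_apply] at this
    have hmsymU : msym U = U := by
      ext i j
      fin_cases i <;> fin_cases j <;>
        simp [hUdef, msym_apply, single, Matrix.of_apply] <;> norm_num
    have hUU : mdot U U = 1 := by
      simp [hUdef, mdot, Fin.sum_univ_three, single, Matrix.of_apply]
    have hms : ∀ τ : ℝ, msym (P₀ + τ • U) = τ • U := by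
      intro τ
      rw [msym_add, hmsymP₀, msym_smul, hmsymU, zero_add]
    have hmn : ∀ τ : ℝ, 0 < τ → mnorm (msym (P₀ + τ • U)) = τ := by
      intro τ hτ
      rw [hms, mnorm, mdot_smul_self, hUU, mul_one, Real.sqrt_sq_eq_abs, abs_of_pos hτ]
    have hmne : ∀ τ : ℝ, 0 < τ → msym (P₀ + τ • U) ≠ 0 := by
      intro τ hτ h
      rw [hms] at h
      have h00 := congrFun (congrFun h 0) 0
      simp [hUdef, Matrix.smul_apply, single, Matrix.of_apply] at h00
      exact hτ.ne' h00
    -- translation invariance of S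
    have hshift : ∀ X : Mat3, S (X + P₀) = S X := by
      intro X
      rw [pd.symdep (X + P₀), msym_add, hmsymP₀, add_zero, ← pd.symdep X]
    have hSd0 : fderiv ℝ S 0 = fderiv ℝ S P₀ := by
      have h1 : (fun y : Mat3 => S (y + P₀)) = S := funext hshift
      calc fderiv ℝ S 0 = fderiv ℝ (fun y : Mat3 => S (y + P₀)) 0 := by rw [h1]
        _ = fderiv ℝ S (0 + P₀) := fderiv_shift S P₀ 0
        _ = fderiv ℝ S P₀ := by rw [zero_add]
    -- continuity of the derivative at P₀
    have hDcont : ContinuousAt (fderiv ℝ S) P₀ := by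
      have hco : ContinuousOn (fderiv ℝ S) {(0:Mat3)}ᶜ :=
        pd.smooth.continuousOn_fderiv_of_isOpen isOpen_compl_singleton le_rfl
      exact hco.continuousAt (compl_singleton_mem_nhds hP₀ne)
    have hpath : Filter.Tendsto (fun τ : ℝ => P₀ + τ • U) (nhdsWithin 0 (Set.Ioi 0))
        (nhds P₀) := by
      have hcont : Continuous (fun τ : ℝ => P₀ + τ • U) :=
        continuous_const.add (continuous_id.smul continuous_const)
      have := hcont.tendsto 0
      rw [show P₀ + (0:ℝ) • U = P₀ by simp] at this
      exact this.mono_left nhdsWithin_le_nhds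
    have hDtend : Filter.Tendsto (fun τ : ℝ => fderiv ℝ S (P₀ + τ • U))
        (nhdsWithin 0 (Set.Ioi 0)) (nhds (fderiv ℝ S P₀)) := hDcont.tendsto.comp hpath
    have hentry : ∀ k l m n : Fin 3, Filter.Tendsto
        (fun τ : ℝ => DS S (P₀ + τ • U) k l m n) (nhdsWithin 0 (Set.Ioi 0))
        (nhds (fderiv ℝ S P₀ (single k l 1) m n)) := by
      intro k l m n
      have heval : Continuous fun L : Mat3 →L[ℝ] Mat3 => L (single k l 1) m n := by
        have h1 : Continuous fun L : Mat3 →L[ℝ] Mat3 => L (single k l 1) :=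
          (ContinuousLinearMap.apply ℝ Mat3 (single k l 1)).continuous
        exact ((continuous_apply n).comp (continuous_apply m)).comp h1
      exact (heval.continuousAt.tendsto).comp hDtend
    have hGG : Filter.Tendsto
        (fun τ : ℝ => ∑ k, ∑ l, ∑ m, ∑ n, DS S (P₀ + τ • U) k l m n * B k l * B m n)
        (nhdsWithin 0 (Set.Ioi 0)) (nhds (Pquad S 0 B)) := by
      have hPq : Pquad S 0 B = ∑ k, ∑ l, ∑ m, ∑ n,
          fderiv ℝ S P₀ (single k l 1) m n * B k l * B m n := by
        unfold Pquad DS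
        rw [hSd0]
      rw [hPq]
      apply tendsto_finset_sum; intro k _
      apply tendsto_finset_sum; intro l _
      apply tendsto_finset_sum; intro m _
      apply tendsto_finset_sum; intro n _
      exact ((hentry k l m n).mul_const _).mul_const _
    have hφtend : Filter.Tendsto (fun τ : ℝ => phi'' p δ τ) (nhdsWithin 0 (Set.Ioi 0))
        (nhds (phi'' p δ 0)) := by
      have hrp : ∀ e : ℝ, ContinuousAt (fun τ : ℝ => (δ + τ) ^ e) 0 := by
        intro e
        have h1 : ContinuousAt (fun τ : ℝ => δ + τ) 0 :=
          (continuous_const.add continuous_id).continuousAt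
        have h2 : ContinuousAt (fun x : ℝ => x ^ e) ((fun τ : ℝ => δ + τ) 0) :=
          Real.continuousAt_rpow_const _ _ (Or.inl (by simp; linarith))
        exact h2.comp h1
      have : ContinuousAt (fun τ : ℝ => phi'' p δ τ) 0 := by
        unfold phi''
        exact ((continuousAt_const.mul (hrp (p-3))).mul continuousAt_id).add (hrp (p-2))
      exact this.tendsto.mono_left nhdsWithin_le_nhds
    have hb : (0:ℝ) ≤ mnorm B ^ 2 := sq_nonneg _
    rw [mnorm_zero]
    constructor
    · -- lower bound via limits
      have hlow : ∀ τ : ℝ, τ ∈ Set.Ioi (0:ℝ) →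
          κ₀ * phi'' p δ τ * mnorm B ^ 2 ≤
            ∑ k, ∑ l, ∑ m, ∑ n, DS S (P₀ + τ • U) k l m n * B k l * B m n := by
        intro τ hτ
        have := pd.lower (P₀ + τ • U) B (hmne τ hτ)
        rw [hmn τ hτ, hmB, sum_reorder] at this
        exact this
      exact le_of_tendsto_of_tendsto
        ((hφtend.const_mul κ₀).mul_const (mnorm B ^ 2)) hGG
        (Filter.eventually_of_mem self_mem_nhdsWithin hlow)
    · have hup : ∀ τ : ℝ, τ ∈ Set.Ioi (0:ℝ) →
          (∑ k, ∑ l, ∑ m, ∑ n, DS S (P₀ + τ • U) k l m n * B k l * B m n)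
            ≤ 9 * (κ₁ * phi'' p δ τ) * mdot B B := by
        intro τ hτ
        apply quad_upper
        intro k l m n
        have := pd.upper (P₀ + τ • U) (hmne τ hτ) m n k l
        rwa [hmn τ hτ] at this
      have hrhs : Filter.Tendsto (fun τ : ℝ => 9 * (κ₁ * phi'' p δ τ) * mdot B B)
          (nhdsWithin 0 (Set.Ioi 0)) (nhds (9 * (κ₁ * phi'' p δ 0) * mdot B B)) :=
        ((hφtend.const_mul κ₁).const_mul 9).mul_const _
      have hfin := le_of_tendsto_of_tendsto hGG hrhs
        (Filter.eventually_of_mem self_mem_nhdsWithin hup)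
      rw [mnorm_sq]
      exact hfin

lemma glue {κ₀ κ₁ m M f g b P E : ℝ} (hκ₀ : 0 < κ₀) (hκ₁ : 0 < κ₁)
    (hm0 : 0 < m) (hM0 : 0 < M) (hb : 0 ≤ b)
    (L1a : m * g ≤ f) (L1b : f ≤ M * g)
    (L2a : κ₀ * f * b ≤ P) (L2b : P ≤ 9 * (κ₁ * f) * b)
    (L3a : m * (g * b) ≤ E) (L3b : E ≤ M * (g * b)) :
    (κ₀ * m / M * (f * b) ≤ P ∧ P ≤ 9 * κ₁ * M / m * (f * b)) ∧
      (κ₀ * m / M * E ≤ P ∧ P ≤ 9 * κ₁ * M / m * E) := by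
  set c := κ₀ * m / M with hcdef
  set C := 9 * κ₁ * M / m with hCdef
  have hcM : c * M = κ₀ * m := by rw [hcdef]; field_simp
  have hCm : C * m = 9 * κ₁ * M := by rw [hCdef]; field_simp
  have hc0 : 0 < c := by positivity
  have hC0 : 0 < C := by positivity
  have a4 : m * (g * b) ≤ f * b := by nlinarith
  have a5 : (κ₀ * m) * (g * b) ≤ κ₀ * (f * b) := by nlinarith
  have afb : f * b ≤ M * (g * b) := by nlinarith
  have hPup : P ≤ 9 * κ₁ * (M * (g * b)) := by nlinarith
  have hCgb : 9 * κ₁ * (M * (g*b)) = C * (m * (g*b)) := by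
    have h9 : 9 * κ₁ * (M * (g*b)) = (9 * κ₁ * M) * (g*b) := by ring
    rw [h9, ← hCm]; ring
  refine ⟨⟨?_, ?_⟩, ?_, ?_⟩
  · calc c * (f * b) ≤ c * (M * (g*b)) := mul_le_mul_of_nonneg_left afb hc0.le
      _ = (κ₀ * m) * (g*b) := by rw [← hcM]; ring
      _ ≤ κ₀ * (f*b) := a5
      _ = κ₀ * f * b := by ring
      _ ≤ P := L2a
  · calc P ≤ 9 * κ₁ * (M * (g*b)) := hPup
      _ = C * (m * (g*b)) := hCgb
      _ ≤ C * (f * b) := mul_le_mul_of_nonneg_left a4 hC0.le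
  · calc c * E ≤ c * (M * (g*b)) := mul_le_mul_of_nonneg_left L3b hc0.le
      _ = (κ₀ * m) * (g*b) := by rw [← hcM]; ring
      _ ≤ κ₀ * (f*b) := a5
      _ = κ₀ * f * b := by ring
      _ ≤ P := L2a
  · calc P ≤ 9 * κ₁ * (M * (g*b)) := hPup
      _ = C * (m * (g*b)) := hCgb
      _ ≤ C * E := mul_le_mul_of_nonneg_left L3a hC0.le


end AuxiliaryLemmas

/-- For `S` with `(p,δ)`-structure and associated `F`, and symmetric `A, B` with
`δ > 0` or `A ≠ 0`: `𝒫(A,B) ∼ φ''(|A|)·|B|² ∼ |DF(A)[B]|²`, with constants depending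
only on the characteristics `(κ₀, κ₁, p)` of `S`. -/
theorem Pquad_equiv_F (p κ₀ κ₁ : ℝ) (hp : 1 < p) (hκ₀ : 0 < κ₀) (hκ₁ : 0 < κ₁) :
    ∃ c C : ℝ, 0 < c ∧ 0 < C ∧ ∀ δ : ℝ, 0 ≤ δ → ∀ S : Mat3 → Mat3,
      PDelta p δ κ₀ κ₁ S →
      ∀ A B : Mat3, Aᵀ = A → Bᵀ = B → (0 < δ ∨ A ≠ 0) →
        (c * (phi'' p δ (mnorm A) * (mnorm B) ^ 2) ≤ Pquad S A B ∧
          Pquad S A B ≤ C * (phi'' p δ (mnorm A) * (mnorm B) ^ 2)) ∧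
        (c * (mnorm (fderiv ℝ (Fassoc p δ) A B)) ^ 2 ≤ Pquad S A B ∧
          Pquad S A B ≤ C * (mnorm (fderiv ℝ (Fassoc p δ) A B)) ^ 2) := by
  have hm0 : 0 < min 1 (p-1) := min_pos hp
  have hM1 : (1:ℝ) ≤ (|p-2|/2+1)^2 := M0_ge_one
  have hM0 : (0:ℝ) < (|p-2|/2+1)^2 := lt_of_lt_of_le one_pos hM1
  refine ⟨κ₀ * min 1 (p-1) / ((|p-2|/2+1)^2),
    9 * κ₁ * ((|p-2|/2+1)^2) / min 1 (p-1), by positivity, by positivity, ?_⟩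
  intro δ hδ S pd A B hAs hBs hc
  have hγ : 0 < δ + mnorm A := by
    rcases hc with h | h
    · have := mnorm_nonneg A; linarith
    · have := mnorm_pos h; linarith
  have hb : (0:ℝ) ≤ mnorm B ^ 2 := sq_nonneg _
  have L1 := phi''_bounds (δ := δ) (t := mnorm A) hp hδ (mnorm_nonneg A) hγ
  have L2 := Pquad_L2 hp hδ pd hAs hBs hc
  have L3 := fassoc_L3 hp hδ hAs hBs hc
  have G := glue hκ₀ hκ₁ hm0 hM0 hb L1.1 L1.2 L2.1 L2.2 L3.1 L3.2
  exact ⟨⟨by linarith [G.1.1], by linarith [G.1.2]⟩, G.2.1, G.2.2⟩
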